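/- Let N ≥ 1, let Ξ ∈ M_N(ℂ) be such that Ξ and its conjugate transpose Ξ† have no common eigenvalue, let η₁, η₂ ∈ ℂ^{N×1}, and let Ω ∈ M_N(ℂ) be the unique solution of the Sylvester equation Ξ·Ω − Ω·Ξ† = η₁·η₁† + η₂·η₂†. Then Ω is skew-Hermitian: Ω† = −Ω. Moreover, if Ω is invertible, then the complex numbers q := −η₁†·Ω⁻¹·η₂ and r := η₂†·Ω⁻¹·η₁ (identifying 1×1 matrices with scalars) satisfy r = conj(q). -/

import Mathlib

open Matrix Polynomial

private lemma list_prod_isUnit {R : Type*} [Monoid R] (l : List R)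
    (h : ∀ x ∈ l, IsUnit x) : IsUnit l.prod := by
  induction l with
  | nil => simp
  | cons a t ih =>
    rw [List.prod_cons]
    exact (h a (List.mem_cons_self (a := a) (l := t))).mul
      (ih fun x hx => h x (List.mem_cons_of_mem a hx))

private lemma pow_intertwine {n : Type*} [Fintype n] [DecidableEq n]
    {A B X : Matrix n n ℂ} (h : A * X = X * B) : ∀ k : ℕ, A ^ k * X = X * B ^ k := by
  intro k
  induction k with
  | zero => simp
  | succ k ih =>
    rw [pow_succ, pow_succ, mul_assoc, h, ← mul_assoc, ih, mul_assoc]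

private lemma aeval_intertwine {n : Type*} [Fintype n] [DecidableEq n]
    {A B X : Matrix n n ℂ} (h : A * X = X * B) (p : ℂ[X]) :
    (aeval A p) * X = X * (aeval B p) := by
  induction p using Polynomial.induction_on' with
  | add p q hp hq => rw [map_add, map_add, add_mul, mul_add, hp, hq]
  | monomial k a =>
    rw [aeval_monomial, aeval_monomial, mul_assoc, pow_intertwine h, ← mul_assoc,
      Algebra.commutes, mul_assoc]

private lemma root_charpoly_mem_spectrum {n : Type*} [Fintype n] [DecidableEq n]
    (M : Matrix n n ℂ) {r : ℂ} (h : M.charpoly.eval r = 0) : r ∈ spectrum ℂ M := by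
  rw [spectrum.mem_iff]
  intro hu
  have hdet : (algebraMap ℂ (Matrix n n ℂ) r - M).det = M.charpoly.eval r := by
    rw [Matrix.charpoly, ← Polynomial.coe_evalRingHom, RingHom.map_det]
    congr 1
    ext i j
    by_cases hij : i = j
    · subst hij
      simp [charmatrix_apply_eq, Matrix.algebraMap_matrix_apply]
    · simp [charmatrix_apply_ne _ _ _ hij, Matrix.algebraMap_matrix_apply, hij]
  have hud := (Matrix.isUnit_iff_isUnit_det _).mp hu
  rw [hdet, h] at hud
  exact hud.ne_zero rfl

/-- Uniqueness part: if spectra are disjoint, the only solution of `A X = X B` is `0`. -/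
private lemma eq_zero_of_intertwine {n : Type*} [Fintype n] [DecidableEq n]
    {A B Y : Matrix n n ℂ} (hAB : spectrum ℂ A ∩ spectrum ℂ B = ∅)
    (h : A * Y = Y * B) : Y = 0 := by
  have hmon : A.charpoly.Monic := Matrix.charpoly_monic A
  have hkey : (aeval A A.charpoly) * Y = Y * (aeval B A.charpoly) :=
    aeval_intertwine h A.charpoly
  rw [Matrix.aeval_self_charpoly, zero_mul] at hkey
  have hunit : IsUnit (aeval B A.charpoly) := by
    have hsplit := IsAlgClosed.splits A.charpoly
    have hfact := hsplit.eq_prod_roots_of_monic hmon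
    rw [hfact, ← Multiset.prod_toList, map_list_prod]
    refine list_prod_isUnit _ fun x hx => ?_
    obtain ⟨y, hy, rfl⟩ := List.mem_map.mp hx
    obtain ⟨r, hr, rfl⟩ := Multiset.mem_map.mp (Multiset.mem_toList.mp hy)
    have hroot : A.charpoly.eval r = 0 := (Polynomial.mem_roots hmon.ne_zero).mp hr
    have hrA : r ∈ spectrum ℂ A := root_charpoly_mem_spectrum A hroot
    have hrB : r ∉ spectrum ℂ B := by
      intro hmem
      exact Set.eq_empty_iff_forall_notMem.mp hAB r ⟨hrA, hmem⟩
    rw [spectrum.notMem_iff] at hrB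
    simpa [map_sub, aeval_X, aeval_C, neg_sub] using hrB.neg
  exact ((hunit.mul_left_eq_zero).mp hkey.symm)

/-- **Conjugate reduction to the focusing NLS equation.**
If `Ξ` and `Ξᴴ` share no eigenvalue and `Ω` solves the Sylvester equation
`ΞΩ − ΩΞᴴ = η₁η₁ᴴ + η₂η₂ᴴ`, then `Ω` is skew-Hermitian, and (when `Ω` is invertible)
the scalars `q = −η₁ᴴΩ⁻¹η₂` and `r = η₂ᴴΩ⁻¹η₁` satisfy `r = conj q`. -/
theorem focusing_NLS_conjugate_reduction (N : ℕ) (hN : 1 ≤ N)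
    (Ξ : Matrix (Fin N) (Fin N) ℂ)
    (hΞ : spectrum ℂ Ξ ∩ spectrum ℂ Ξᴴ = ∅)
    (η₁ η₂ : Matrix (Fin N) (Fin 1) ℂ)
    (Ω : Matrix (Fin N) (Fin N) ℂ)
    (hSyl : Ξ * Ω - Ω * Ξᴴ = η₁ * η₁ᴴ + η₂ * η₂ᴴ) :
    Ωᴴ = -Ω ∧
    (IsUnit Ω →
      (η₂ᴴ * Ω⁻¹ * η₁) 0 0 = starRingEnd ℂ (-((η₁ᴴ * Ω⁻¹ * η₂) 0 0))) := by
  have hconj : Ωᴴ * Ξᴴ - Ξ * Ωᴴ = η₁ * η₁ᴴ + η₂ * η₂ᴴ := by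
    have := congrArg conjTranspose hSyl
    simpa [conjTranspose_sub, conjTranspose_add, conjTranspose_mul] using this
  have hint : Ξ * (Ω + Ωᴴ) = (Ω + Ωᴴ) * Ξᴴ := by
    have h1 : Ξ * Ω - Ω * Ξᴴ = Ωᴴ * Ξᴴ - Ξ * Ωᴴ := by rw [hSyl, hconj]
    rw [sub_eq_sub_iff_add_eq_add] at h1
    rw [mul_add, add_mul, h1, add_comm]
  have hskew : Ω + Ωᴴ = 0 := eq_zero_of_intertwine hΞ hint
  have hskew' : Ωᴴ = -Ω := eq_neg_of_add_eq_zero_left (by rwa [add_comm] at hskew)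
  refine ⟨hskew', fun hU => ?_⟩
  have hinv : Ω⁻¹ᴴ = -Ω⁻¹ := by
    rw [conjTranspose_nonsing_inv, hskew']
    refine Matrix.inv_eq_right_inv ?_
    rw [neg_mul_neg, Matrix.mul_nonsing_inv _ (Matrix.isUnit_iff_isUnit_det _ |>.mp hU)]
  have hT : (η₁ᴴ * Ω⁻¹ * η₂)ᴴ = -(η₂ᴴ * Ω⁻¹ * η₁) := by
    rw [conjTranspose_mul, conjTranspose_mul, conjTranspose_conjTranspose, hinv]
    rw [Matrix.neg_mul, Matrix.mul_neg, ← Matrix.mul_assoc]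
  have hc : starRingEnd ℂ ((η₁ᴴ * Ω⁻¹ * η₂) 0 0) = ((η₁ᴴ * Ω⁻¹ * η₂)ᴴ) 0 0 :=
    (conjTranspose_apply _ _ _).symm
  rw [map_neg, hc, hT]
  simp
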